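/- Let c = 5. For all natural numbers d, k, i, H, C with d ≥ 1, k ≥ 1, i ≥ 1, if 380 + 20d < 2^(2^(k−1)), H + C ≥ 4c·2^(2^(i+k)) − c, and H ≤ (c−1) · ( d·2^(i+k) + 2·2^(2^(i+k)) + ∑_{j=0}^{i−1} ( (4 + 2d + 8c)·2^(2^(j+k)) + 2c ) ), then C > 0. -/

import Mathlib

lemma sum_pow_bound (k : ℕ) : ∀ n, 1 ≤ n →
    ∑ j ∈ Finset.range n, 2 ^ 2 ^ (j + k) ≤ 2 * 2 ^ 2 ^ (n - 1 + k) := by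
  intro n hn
  induction n with
  | zero => omega
  | succ m ih =>
    rcases Nat.eq_zero_or_pos m with h0 | hm
    · subst h0; simp
    · rw [Finset.sum_range_succ]
      have h1 := ih hm
      have h2 : 2 * 2 ^ 2 ^ (m - 1 + k) ≤ 2 ^ 2 ^ (m + k) := by
        have hexp : 2 ^ (m - 1 + k) + 1 ≤ 2 ^ (m + k) := by
          have hle : m - 1 + k + 1 ≤ m + k := by omega
          have h1p : 1 ≤ 2 ^ (m - 1 + k) := Nat.one_le_two_pow
          calc 2 ^ (m - 1 + k) + 1 ≤ 2 ^ (m - 1 + k) * 2 := by omega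
            _ = 2 ^ (m - 1 + k + 1) := by ring
            _ ≤ 2 ^ (m + k) := Nat.pow_le_pow_right (by norm_num) hle
        calc 2 * 2 ^ 2 ^ (m - 1 + k) = 2 ^ (2 ^ (m - 1 + k) + 1) := by ring
          _ ≤ 2 ^ 2 ^ (m + k) := Nat.pow_le_pow_right (by norm_num) hexp
      have hcanc : m + 1 - 1 + k = m + k := by omega
      rw [hcanc]
      omega

/-- Correctness condition for shift-up at levels `i ≥ 1`: invariant I.9 together with
the bound on the number of helping points implies that there is at least one climbing
point. -/
theorem climbing_points_exist (c : ℕ) (hc : c = 5) (d k i H C : ℕ)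
    (hd : 1 ≤ d) (hk : 1 ≤ k) (hi : 1 ≤ i)
    (hcond : 380 + 20 * d < 2 ^ 2 ^ (k - 1))
    (hHC : 4 * c * 2 ^ 2 ^ (i + k) - c ≤ H + C)
    (hH : H ≤ (c - 1) * (d * 2 ^ (i + k) + 2 * 2 ^ 2 ^ (i + k) +
        ∑ j ∈ Finset.range i, ((4 + 2 * d + 8 * c) * 2 ^ 2 ^ (j + k) + 2 * c))) :
    0 < C := by
  subst hc
  by_contra hC
  have hC0 : C = 0 := by omega
  subst hC0
  set A := 2 ^ (i + k) with hA
  set N := 2 ^ 2 ^ (i + k) with hN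
  set M := 2 ^ 2 ^ (i + k - 1) with hM
  set P := 2 ^ 2 ^ (k - 1) with hP
  -- N = M * M
  have hNM : N = M * M := by
    have h1 : 2 ^ (i + k) = 2 ^ (i + k - 1) * 2 := by
      rw [← pow_succ]
      congr 1
      omega
    rw [hN, h1, pow_mul, sq, hM]
  -- sum bound
  have hsum : ∑ j ∈ Finset.range i, 2 ^ 2 ^ (j + k) ≤ 2 * M := by
    have he : i - 1 + k = i + k - 1 := by omega
    have := sum_pow_bound k i hi
    rwa [he] at this
  -- rewrite the big sum
  have hSrw : ∑ j ∈ Finset.range i, ((4 + 2 * d + 8 * 5) * 2 ^ 2 ^ (j + k) + 2 * 5)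
      = (4 + 2 * d + 40) * (∑ j ∈ Finset.range i, 2 ^ 2 ^ (j + k)) + 10 * i := by
    rw [Finset.sum_add_distrib, ← Finset.mul_sum, Finset.sum_const, Finset.card_range]
    ring
  -- A ≤ M
  have hAM : A ≤ M := by
    have h1 : i + k - 1 < 2 ^ (i + k - 1) := Nat.lt_two_pow_self
    have h2 : i + k ≤ 2 ^ (i + k - 1) := by omega
    exact Nat.pow_le_pow_right (by norm_num) h2
  -- i ≤ M
  have hiM : i ≤ M := by
    have h1 : i + k - 1 < 2 ^ (i + k - 1) := Nat.lt_two_pow_self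
    have h2 : 2 ^ (i + k - 1) ≤ M :=
      Nat.pow_le_pow_right (by norm_num) (le_of_lt h1)
    omega
  -- P ≤ M
  have hPM : P ≤ M := Nat.pow_le_pow_right (by norm_num)
    (Nat.pow_le_pow_right (by norm_num) (by omega))
  have hM1 : 1 ≤ M := Nat.one_le_two_pow
  have h397 : 397 + 20 * d ≤ 2 * P := by omega
  have h20N : 20 * N ≤ H + 5 := by
    have hN5 : 5 ≤ N := by
      have : 4 ≤ 2 ^ (i + k) := by
        calc 4 = 2 ^ 2 := by norm_num
        _ ≤ 2 ^ (i + k) := Nat.pow_le_pow_right (by norm_num) (by omega)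
      calc 5 ≤ 2 ^ 4 := by norm_num
        _ ≤ N := Nat.pow_le_pow_right (by norm_num) this
    omega
  rw [hSrw] at hH
  -- chain of bounds
  have key : H + 5 ≤ 10 * N := by
    have b1 : H ≤ 4 * (d * A + 2 * N + ((4 + 2 * d + 40) * (2 * M) + 10 * i)) := by
      have := Nat.mul_le_mul_left (4 + 2 * d + 40) hsum
      omega
    have b2 : d * A ≤ d * M := Nat.mul_le_mul_left d hAM
    have b3 : (397 + 20 * d) * M ≤ 2 * P * M := Nat.mul_le_mul_right M h397
    have b4 : 2 * P * M ≤ 2 * (M * M) := by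
      have := Nat.mul_le_mul_right M hPM
      nlinarith
    nlinarith [hNM, hiM, hM1]
  have hNpos : 0 < N := by positivity
  omega
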